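/- Euler's transformation: let a, b, c ∈ ℂ with c ∉ {0,−1,−2,…}, and let z ∈ ℂ with |z| < 1. Then F(a,b;c;z) = (1−z)^{c−a−b} F(c−a,c−b;c;z), where (1−z)^{c−a−b} is the principal power (well defined since Re(1−z) > 0). -/

import Mathlib

open Complex Finset Filter

noncomputable def pch (x : ℂ) (n : ℕ) : ℂ := (ascPochhammer ℂ n).eval x

lemma pch_zero (x : ℂ) : pch x 0 = 1 := by simp [pch]

lemma pch_succ (x : ℂ) (n : ℕ) : pch x (n+1) = pch x n * (x + n) := by
  simp [pch, ascPochhammer_succ_eval]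

lemma pch_succ_left (x : ℂ) (n : ℕ) : pch x (n+1) = x * pch (x+1) n := by
  simp only [pch, ascPochhammer_succ_left, Polynomial.eval_mul, Polynomial.eval_X,
    Polynomial.eval_comp, Polynomial.eval_add, Polynomial.eval_one]

lemma pch_add (x : ℂ) (k m : ℕ) : pch x (k+m) = pch x k * pch (x + k) m := by
  have := ascPochhammer_mul ℂ k m
  have h := congrArg (Polynomial.eval x) this
  simp only [Polynomial.eval_mul, Polynomial.eval_comp, Polynomial.eval_add,
    Polynomial.eval_X, Polynomial.eval_natCast] at h
  simpa [pch] using h.symm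

lemma pch_ne_zero {c : ℂ} (hc : ∀ n : ℕ, c ≠ -(n : ℂ)) (n : ℕ) : pch c n ≠ 0 := by
  induction n with
  | zero => simp [pch_zero]
  | succ n ih =>
    rw [pch_succ]
    refine mul_ne_zero ih (fun h => hc n ?_)
    linear_combination h

lemma ratio_summable (d R : ℕ → ℂ) (hd : ∀ n, d (n+1) = R n * d n) {L : ℝ}
    (hL : L < 1) (hR : Tendsto (fun n => ‖R n‖) atTop (nhds L)) :
    Summable (fun n => ‖d n‖) := by
  have hr1 : (L+1)/2 < 1 := by linarith
  have hLr : L < (L+1)/2 := by linarith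
  have hev : ∀ᶠ n in atTop, ‖R n‖ < (L+1)/2 := hR.eventually_lt_const hLr
  apply summable_of_ratio_norm_eventually_le hr1
  filter_upwards [hev] with n hn
  rw [Real.norm_of_nonneg (norm_nonneg _), Real.norm_of_nonneg (norm_nonneg _), hd n, norm_mul]
  exact mul_le_mul_of_nonneg_right hn.le (norm_nonneg _)

lemma tendsto_ratio1 (u : ℂ) :
    Tendsto (fun n : ℕ => (u + n)/((n:ℂ)+1)) atTop (nhds 1) := by
  have h0 : Tendsto (fun n : ℕ => ((n:ℂ)+1)⁻¹) atTop (nhds 0) := by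
    rw [tendsto_zero_iff_norm_tendsto_zero]
    have : (fun n : ℕ => ‖((n:ℂ)+1)⁻¹‖) = fun n : ℕ => 1/((n:ℝ)+1) := by
      funext n
      rw [norm_inv]
      have : ((n:ℂ)+1) = ((n+1:ℕ):ℂ) := by push_cast; ring
      rw [this, Complex.norm_natCast]
      push_cast; ring
    rw [this]
    exact tendsto_one_div_add_atTop_nhds_zero_nat
  have : (fun n : ℕ => (u + n)/((n:ℂ)+1)) = fun n : ℕ => 1 + (u-1) * ((n:ℂ)+1)⁻¹ := by
    funext n
    have hn : ((n:ℂ)+1) ≠ 0 := by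
      have : ((n:ℂ)+1) = ((n+1:ℕ):ℂ) := by push_cast; ring
      rw [this]
      exact Nat.cast_ne_zero.mpr (Nat.succ_ne_zero n)
    field_simp
    ring
  rw [this]
  have := (tendsto_const_nhds (x := (1:ℂ)) (f := atTop)).add
    ((tendsto_const_nhds (x := (u-1:ℂ)) (f := atTop)).mul h0)
  simpa using this

lemma tendsto_ratio2 (u v : ℂ) :
    Tendsto (fun n : ℕ => (u + n)/(v + n)) atTop (nhds 1) := by
  have h1 := tendsto_ratio1 u
  have h2 := tendsto_ratio1 v
  have := h1.div h2 one_ne_zero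
  rw [div_one] at this
  apply this.congr
  intro n
  rcases eq_or_ne (v + (n:ℂ)) 0 with hv | hv
  · simp [hv]
  · have hn : ((n:ℂ)+1) ≠ 0 := by
      have h3 : ((n:ℂ)+1) = ((n+1:ℕ):ℂ) := by push_cast; ring
      rw [h3]
      exact Nat.cast_ne_zero.mpr (Nat.succ_ne_zero n)
    simp only [Pi.div_apply]
    field_simp

noncomputable def bq (w : ℂ) (n : ℕ) : ℂ := pch w n / (n.factorial : ℂ)

lemma fact_ne (n : ℕ) : ((n.factorial : ℂ)) ≠ 0 :=
  Nat.cast_ne_zero.mpr n.factorial_ne_zero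

lemma natsucc_ne (n : ℕ) : ((n:ℂ)+1) ≠ 0 := by
  have h3 : ((n:ℂ)+1) = ((n+1:ℕ):ℂ) := by push_cast; ring
  rw [h3]; exact Nat.cast_ne_zero.mpr (Nat.succ_ne_zero n)

lemma bq_zero (w : ℂ) : bq w 0 = 1 := by simp [bq, pch_zero]

lemma bq_succ (w : ℂ) (n : ℕ) : bq w (n+1) = ((w + n)/((n:ℂ)+1)) * bq w n := by
  simp only [bq, pch_succ, Nat.factorial_succ]
  have h1 := fact_ne n
  have h2 := natsucc_ne n
  field_simp
  push_cast
  ring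

/-- summability of the binomial series -/
lemma bq_summable_norm (w z : ℂ) (hz : ‖z‖ < 1) :
    Summable (fun n => ‖bq w n * z^n‖) := by
  apply ratio_summable _ (fun n => ((w + n)/((n:ℂ)+1)) * z) _ hz
  · have := ((tendsto_ratio1 w).norm.mul (tendsto_const_nhds (x := ‖z‖) (f := atTop)))
    rw [norm_one, one_mul] at this
    exact this.congr (fun n => (norm_mul _ _).symm)
  · intro n
    rw [bq_succ, pow_succ]
    ring

/-- summability of terms `n * bq w n * ρ^(n-1)` (derivative series bound) -/
lemma bq_deriv_summable (w : ℂ) (ρ : ℝ) (hρ0 : 0 ≤ ρ) (hρ : ρ < 1) :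
    Summable (fun n : ℕ => (n:ℝ) * ‖bq w n‖ * ρ^(n-1)) := by
  rw [← summable_nat_add_iff 1]
  have key : Summable (fun n : ℕ => ‖((n:ℂ)+1) * bq w (n+1) * (ρ:ℂ)^n‖) := by
    apply ratio_summable _ (fun n => ((w + n + 1)/((n:ℂ)+1)) * ρ) _ hρ
    · have h1 : Tendsto (fun n : ℕ => ((w+1) + n)/((n:ℂ)+1)) atTop (nhds 1) :=
        tendsto_ratio1 (w+1)
      have := (h1.norm.mul (tendsto_const_nhds (x := ‖(ρ:ℂ)‖) (f := atTop)))
      have hρn : ‖(ρ:ℂ)‖ = ρ := by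
        rw [Complex.norm_real, Real.norm_of_nonneg hρ0]
      rw [norm_one, one_mul, hρn] at this
      apply this.congr
      intro n
      rw [norm_mul, hρn]
      congr 2
      ring
    · intro n
      rw [bq_succ w (n+1), pow_succ]
      have h2 := natsucc_ne n
      have h3 := natsucc_ne (n+1)
      push_cast at h3 ⊢
      field_simp
      ring
  apply Summable.congr key
  intro n
  rw [norm_mul, norm_mul]
  have : ‖(ρ:ℂ)^n‖ = ρ^n := by
    rw [norm_pow, Complex.norm_real, Real.norm_of_nonneg hρ0]
  rw [this]
  have : ‖((n:ℂ)+1)‖ = ((n:ℝ)+1) := by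
    have h3 : ((n:ℂ)+1) = ((n+1:ℕ):ℂ) := by push_cast; ring
    rw [h3, Complex.norm_natCast]; push_cast; ring
  rw [this]
  simp

lemma bq_deriv_bound (w : ℂ) (ρ : ℝ) (n : ℕ) {y : ℂ} (hy : ‖y‖ ≤ ρ) :
    ‖bq w n * ((n:ℂ) * y^(n-1))‖ ≤ (n:ℝ) * ‖bq w n‖ * ρ^(n-1) := by
  have hρ0 : (0:ℝ) ≤ ρ := le_trans (norm_nonneg y) hy
  rw [norm_mul, norm_mul, norm_pow]
  have h1 : ‖(n:ℂ)‖ = (n:ℝ) := by rw [Complex.norm_natCast]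
  rw [h1]
  calc ‖bq w n‖ * ((n:ℝ) * ‖y‖^(n-1)) ≤ ‖bq w n‖ * ((n:ℝ) * ρ^(n-1)) := by
        apply mul_le_mul_of_nonneg_left _ (norm_nonneg _)
        exact mul_le_mul_of_nonneg_left (pow_le_pow_left₀ (norm_nonneg y) hy _) (Nat.cast_nonneg n)
    _ = (n:ℝ) * ‖bq w n‖ * ρ^(n-1) := by ring

lemma binomial_deriv (w : ℂ) {z₀ : ℂ} (h : ‖z₀‖ < 1) :
    HasDerivAt (fun y => ∑' n : ℕ, bq w n * y^n)
      (∑' n : ℕ, bq w n * ((n:ℂ) * z₀^(n-1))) z₀ := by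
  set ρ : ℝ := (1 + ‖z₀‖)/2 with hρ
  have hρ0 : 0 < ρ := by positivity
  have hρ1 : ρ < 1 := by simp only [hρ]; linarith
  have hz₀ρ : ‖z₀‖ < ρ := by simp only [hρ]; linarith
  apply hasDerivAt_tsum_of_isPreconnected
    (bq_deriv_summable w ρ hρ0.le hρ1) (Metric.isOpen_ball)
    ((convex_ball (0:ℂ) ρ).isPreconnected)
    (fun n y _ => (hasDerivAt_pow n y).const_mul (bq w n))
    (fun n y hy => bq_deriv_bound w ρ n (mem_ball_zero_iff.mp hy).le)
    (mem_ball_zero_iff.mpr (by rw [norm_zero]; exact hρ0))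
    (summable_of_ne_finset_zero (s := {0}) (fun n hn => by
      have hn0 : n ≠ 0 := by simpa using hn
      simp [zero_pow hn0]))
    (mem_ball_zero_iff.mpr hz₀ρ)

lemma binomial_ode (w : ℂ) {y : ℂ} (hy : ‖y‖ < 1) :
    (1 - y) * (∑' n : ℕ, bq w n * ((n:ℂ) * y^(n-1)))
      = w * ∑' n : ℕ, bq w n * y^n := by
  set ρ : ℝ := (1 + ‖y‖)/2 with hρ
  have hρ0 : 0 < ρ := by positivity
  have hρ1 : ρ < 1 := by simp only [hρ]; linarith
  have hyρ : ‖y‖ ≤ ρ := by simp only [hρ]; linarith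
  have sD : Summable (fun n : ℕ => bq w n * ((n:ℂ) * y^(n-1))) :=
    Summable.of_norm_bounded (bq_deriv_summable w ρ hρ0.le hρ1)
      (fun n => bq_deriv_bound w ρ n hyρ)
  have sB : Summable (fun n : ℕ => bq w n * y^n) := (bq_summable_norm w y hy).of_norm
  have termeq : ∀ n : ℕ, y * (bq w n * ((n:ℂ) * y^(n-1))) = (n:ℂ) * bq w n * y^n := by
    intro n
    cases n with
    | zero => simp
    | succ m => rw [pow_succ']; push_cast; ring
  have hshift : (∑' n : ℕ, bq w n * ((n:ℂ) * y^(n-1)))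
      = ∑' n : ℕ, (w * (bq w n * y^n) + y * (bq w n * ((n:ℂ) * y^(n-1)))) := by
    rw [Summable.tsum_eq_zero_add sD]
    simp only [Nat.cast_zero, zero_mul, mul_zero, zero_add]
    apply tsum_congr
    intro n
    have hrec : bq w (n+1) * ((n:ℂ)+1) = bq w n * (w + n) := by
      have h2 := natsucc_ne n
      have h2' : (1+(n:ℂ)) ≠ 0 := by rw [add_comm]; exact h2
      rw [bq_succ]
      field_simp
    have h1 : bq w (n+1) * (((n:ℕ):ℂ)+1) * y^n = bq w n * (w+n) * y^n := by rw [hrec]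
    rw [termeq n]
    push_cast at h1 ⊢
    linear_combination h1
  have hT : (∑' n : ℕ, bq w n * ((n:ℂ) * y^(n-1)))
      = w * (∑' n : ℕ, bq w n * y^n) + y * (∑' n : ℕ, bq w n * ((n:ℂ) * y^(n-1))) :=
    hshift.trans (by
      rw [Summable.tsum_add (sB.mul_left w) (sD.mul_left y), tsum_mul_left, tsum_mul_left])
  linear_combination hT

lemma binomial_tsum (w z : ℂ) (hz : ‖z‖ < 1) :
    (1 - z) ^ w * ∑' n : ℕ, bq w n * z^n = 1 := by
  have hzero : ∀ y ∈ Metric.ball (0:ℂ) 1,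
      HasDerivAt (fun t => (1-t) ^ w * ∑' n : ℕ, bq w n * t^n) 0 y := by
    intro y hy
    have hy1 : ‖y‖ < 1 := mem_ball_zero_iff.mp hy
    have h1y : (1:ℂ) - y ≠ 0 := by
      intro h
      have : ‖y‖ = 1 := by
        have : y = 1 := by linear_combination -h
        simp [this]
      linarith
    have hslit : (1:ℂ) - y ∈ slitPlane := by
      rw [Complex.mem_slitPlane_iff]
      left
      have := Complex.abs_re_le_norm y
      simp only [Complex.sub_re, Complex.one_re]
      have : y.re ≤ ‖y‖ := le_trans (le_abs_self _) this
      linarith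
    have hD1 : HasDerivAt (fun t : ℂ => (1:ℂ) - t) (-1) y := by
      simpa using (hasDerivAt_id y).const_sub (1:ℂ)
    have hcp : HasDerivAt (fun t : ℂ => (1-t) ^ w) (w * (1-y)^(w-1) * (-1)) y :=
      hD1.cpow_const hslit
    have hprod := hcp.mul (binomial_deriv w hy1)
    have hpow : (1-y)^w = (1-y)^(w-1) * (1-y) := by
      have : w = (w-1) + 1 := by ring
      rw [this]
      rw [cpow_add _ _ h1y, cpow_one]
      ring_nf
    have hv : w*(1-y)^(w-1)*(-1) * (∑' n : ℕ, bq w n * y^n)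
        + (1-y)^w * (∑' n : ℕ, bq w n * ((n:ℂ) * y^(n-1))) = 0 := by
      rw [hpow]
      linear_combination ((1-y)^(w-1)) * (binomial_ode w hy1)
    exact hv ▸ hprod
  have hCLM : ‖ContinuousLinearMap.smulRight (1 : ℂ →L[ℂ] ℂ) (0:ℂ)‖ ≤ (0:ℝ) := by
    have : ContinuousLinearMap.smulRight (1 : ℂ →L[ℂ] ℂ) (0:ℂ) = 0 := by
      ext
      simp
    simp [this]
  have h0mem : (0:ℂ) ∈ Metric.ball (0:ℂ) 1 := by simp
  have hzmem : z ∈ Metric.ball (0:ℂ) 1 := mem_ball_zero_iff.mpr hz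
  have hle := Convex.norm_image_sub_le_of_norm_hasFDerivWithin_le
    (f := fun t => (1-t) ^ w * ∑' n : ℕ, bq w n * t^n)
    (f' := fun _ => ContinuousLinearMap.smulRight (1 : ℂ →L[ℂ] ℂ) (0:ℂ))
    (fun x hx => ((hzero x hx).hasFDerivAt).hasFDerivWithinAt)
    (fun x _ => hCLM) (convex_ball 0 1) h0mem hzmem
  rw [zero_mul] at hle
  have heq : (1-z) ^ w * (∑' n : ℕ, bq w n * z^n)
      = (1-(0:ℂ)) ^ w * ∑' n : ℕ, bq w n * (0:ℂ)^n := by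
    have := norm_le_zero_iff.mp hle
    have := sub_eq_zero.mp this
    exact this
  rw [heq]
  have hF0 : (∑' n : ℕ, bq w n * (0:ℂ)^n) = 1 := by
    rw [tsum_eq_single 0 (fun n hn => by simp [zero_pow hn])]
    simp [bq_zero]
  rw [hF0, sub_zero, one_cpow, mul_one]

/-- summand of the Pfaff–Saalschütz identity -/
noncomputable def sa (a b c : ℂ) (n k : ℕ) : ℂ :=
  (n.choose k : ℂ) * pch a k * pch b k * pch (c-a-b) (n-k) * pch (c + k) (n-k)

lemma sa_local (a b c : ℂ) (n j : ℕ) (hj : j ≤ n) :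
    sa a b c (n+1) (j+1) =
      ((c-a+n)*(c-b+n) - (a+(j+1))*(b+(j+1))) * sa a b c n (j+1)
        + (a+j)*(b+j) * sa a b c n j := by
  rcases eq_or_lt_of_le hj with rfl | hjn
  · simp only [sa, Nat.choose_self, Nat.sub_self, Nat.choose_succ_self, pch_zero,
      Nat.cast_one, Nat.cast_zero]
    push_cast
    rw [pch_succ a, pch_succ b]
    ring
  · obtain ⟨m, rfl⟩ : ∃ m, n = j + 1 + m := by
      obtain ⟨m, hm⟩ := Nat.exists_eq_add_of_lt hjn
      exact ⟨m, by omega⟩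
    have e1 : (j+1+m) - (j+1) = m := by omega
    have e2 : (j+1+m) - j = m+1 := by omega
    have e3 : (j+1+m+1) - (j+1) = m+1 := by omega
    have hn : (j+1+m+1).choose (j+1) = (j+1+m).choose j + (j+1+m).choose (j+1) := by
      rw [Nat.add_right_comm j 1 m, Nat.choose_succ_succ]
    have h1 : ((j+1+m+1).choose (j+1) : ℂ)
        = ((j+1+m).choose j : ℂ) + ((j+1+m).choose (j+1) : ℂ) := by
      exact_mod_cast congrArg (Nat.cast : ℕ → ℂ) hn
    have h2 : ((j+1+m).choose (j+1) : ℂ) * ((j:ℂ)+1)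
        = ((j+1+m).choose j : ℂ) * ((m:ℂ)+1) := by
      have h3 := Nat.choose_succ_right_eq (j+1+m) j
      rw [e2] at h3
      exact_mod_cast congrArg (Nat.cast : ℕ → ℂ) h3
    simp only [sa, e1, e2, e3]
    push_cast
    have hcj : c + ((j:ℂ)+1) = c + (j:ℂ) + 1 := by ring
    rw [hcj]
    rw [pch_succ a j, pch_succ b j, pch_succ (c-a-b) m,
        pch_succ (c + (j:ℂ) + 1) m, pch_succ_left (c + (j:ℂ)) m]
    set E := pch a j * pch b j * pch (c-a-b) m * pch (c+(j:ℂ)+1) m with hE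
    linear_combination ((a+(j:ℂ))*(b+(j:ℂ))*(c-a-b+(m:ℂ))*(c+(j:ℂ)+1+(m:ℂ))*E) * h1
      - ((a+(j:ℂ))*(b+(j:ℂ))*(c-a-b+(m:ℂ))*E) * h2

lemma saalschutz (a b c : ℂ) (n : ℕ) :
    ∑ k ∈ range (n+1), sa a b c n k = pch (c-a) n * pch (c-b) n := by
  induction n with
  | zero => simp [sa, pch_zero]
  | succ n ih =>
    have hzero : sa a b c n (n+1) = 0 := by simp [sa, Nat.choose_succ_self]
    have h0 : sa a b c (n+1) 0 = ((c-a+n)*(c-b+n) - a*b) * sa a b c n 0 := by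
      simp only [sa, Nat.choose_zero_right, pch_zero, Nat.cast_one, Nat.sub_zero,
        Nat.cast_zero, add_zero, one_mul, mul_one]
      rw [pch_succ (c-a-b) n, pch_succ c n]
      ring
    rw [Finset.sum_range_succ' _ (n+1),
      Finset.sum_congr rfl (fun j hj => sa_local a b c n j (by
        simpa using Nat.lt_succ_iff.mp (mem_range.mp hj)))]
    have expand : ∑ j ∈ range (n+1),
        (((c-a+(n:ℂ))*(c-b+(n:ℂ)) - (a+((j:ℂ)+1))*(b+((j:ℂ)+1))) * sa a b c n (j+1)
          + (a+(j:ℂ))*(b+(j:ℂ)) * sa a b c n j)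
        = (c-a+(n:ℂ))*(c-b+(n:ℂ)) * (∑ j ∈ range (n+1), sa a b c n (j+1))
          - (∑ j ∈ range (n+1), (a+((j:ℂ)+1))*(b+((j:ℂ)+1)) * sa a b c n (j+1))
          + ∑ j ∈ range (n+1), (a+(j:ℂ))*(b+(j:ℂ)) * sa a b c n j := by
      rw [Finset.mul_sum, ← Finset.sum_sub_distrib, ← Finset.sum_add_distrib]
      exact Finset.sum_congr rfl (fun j _ => by ring)
    have shift1 : ∑ j ∈ range (n+1), sa a b c n (j+1)
        = (∑ k ∈ range (n+1), sa a b c n k) - sa a b c n 0 := by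
      rw [eq_sub_iff_add_eq, ← Finset.sum_range_succ' (sa a b c n) (n+1),
        Finset.sum_range_succ, hzero, add_zero]
    have shift2 : ∑ j ∈ range (n+1), (a+((j:ℂ)+1))*(b+((j:ℂ)+1)) * sa a b c n (j+1)
        = (∑ k ∈ range (n+1), (a+(k:ℂ))*(b+(k:ℂ)) * sa a b c n k)
            - (a+(0:ℂ))*(b+(0:ℂ)) * sa a b c n 0 := by
      rw [eq_sub_iff_add_eq]
      have := Finset.sum_range_succ' (fun k => (a+(k:ℂ))*(b+(k:ℂ)) * sa a b c n k) (n+1)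
      push_cast at this ⊢
      rw [← this, Finset.sum_range_succ, hzero]
      ring
    push_cast at expand ⊢
    rw [expand, shift1, shift2, ih, h0, pch_succ (c-a) n, pch_succ (c-b) n]
    ring

lemma pch_def (x : ℂ) (n : ℕ) : (ascPochhammer ℂ n).eval x = pch x n := rfl

lemma binomial_tsum_eq (w z : ℂ) (hz : ‖z‖ < 1) :
    ∑' n : ℕ, bq w n * z^n = (1-z)^(-w) := by
  have h1z : (1:ℂ) - z ≠ 0 := by
    intro h
    have hz1 : z = 1 := by linear_combination -h
    rw [hz1] at hz
    simp at hz
  have h1 := binomial_tsum w z hz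
  rw [cpow_neg]
  exact eq_inv_of_mul_eq_one_left (by linear_combination h1)

lemma hyp_summable_norm (e f g z : ℂ) (hg : ∀ n : ℕ, g ≠ -(n:ℂ)) (hz : ‖z‖ < 1) :
    Summable (fun n : ℕ => ‖pch e n * pch f n * z^n / (pch g n * (n.factorial:ℂ))‖) := by
  apply ratio_summable _ (fun n => ((e+n)/((n:ℂ)+1)) * ((f+n)/(g+n)) * z) _ hz
  · have h1 := (tendsto_ratio1 e).norm
    have h2 := (tendsto_ratio2 f g).norm
    rw [norm_one] at h1 h2
    have := (h1.mul h2).mul (tendsto_const_nhds (x := ‖z‖) (f := atTop))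
    rw [one_mul, one_mul] at this
    exact this.congr (fun n => by rw [← norm_mul, ← norm_mul])
  · intro n
    have hgn : g + (n:ℂ) ≠ 0 := fun h => hg n (by linear_combination h)
    have hpg : pch g n ≠ 0 := pch_ne_zero hg n
    have hfn := fact_ne n
    have hsn := natsucc_ne n
    rw [pch_succ e, pch_succ f, pch_succ g, pow_succ, Nat.factorial_succ]
    push_cast
    field_simp

lemma euler_inner_sum (a b c z : ℂ) (hc : ∀ n : ℕ, c ≠ -(n : ℂ)) (n : ℕ) :
    ∑ k ∈ range (n+1),
      (pch (c-a) k * pch (c-b) k * z^k / (pch c k * (k.factorial:ℂ)))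
        * (bq (a+b-c) (n-k) * z^(n-k))
      = pch a n * pch b n * z^n / (pch c n * (n.factorial:ℂ)) := by
  have hS := saalschutz (c-a) (c-b) c n
  rw [show c-(c-a) = a by ring, show c-(c-b) = b by ring] at hS
  simp only [sa, show c-(c-a)-(c-b) = a+b-c by ring] at hS
  have key : ∀ k ∈ range (n+1),
      (pch (c-a) k * pch (c-b) k * z^k / (pch c k * (k.factorial:ℂ)))
        * (bq (a+b-c) (n-k) * z^(n-k))
      = ((n.choose k : ℂ) * pch (c-a) k * pch (c-b) k * pch (a+b-c) (n-k) * pch (c+k) (n-k))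
          * (z^n / (pch c n * (n.factorial:ℂ))) := by
    intro k hk
    have hkn : k ≤ n := Nat.lt_succ_iff.mp (mem_range.mp hk)
    have hsplit : pch c n = pch c k * pch (c+(k:ℂ)) (n-k) := by
      have := pch_add c k (n-k)
      rwa [Nat.add_sub_cancel' hkn] at this
    have hfact : ((n.factorial:ℂ)) = (n.choose k : ℂ) * (k.factorial:ℂ) * ((n-k).factorial:ℂ) := by
      have := Nat.choose_mul_factorial_mul_factorial hkn
      exact_mod_cast (congrArg (Nat.cast : ℕ → ℂ) this).symm
    have hpow : z^k * z^(n-k) = z^n := by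
      rw [← pow_add, Nat.add_sub_cancel' hkn]
    have hck : pch c k ≠ 0 := pch_ne_zero hc k
    have hckk : pch (c+(k:ℂ)) (n-k) ≠ 0 := by
      apply pch_ne_zero
      intro m h
      exact hc (m+k) (by push_cast; linear_combination h)
    have hchoose : (n.choose k : ℂ) ≠ 0 :=
      Nat.cast_ne_zero.mpr (Nat.choose_pos hkn).ne'
    have hfk := fact_ne k
    have hfnk := fact_ne (n-k)
    simp only [bq]
    rw [hsplit, hfact, ← hpow]
    field_simp
  rw [Finset.sum_congr rfl key, ← Finset.sum_mul, hS]
  ring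

/-- Euler's transformation:
`F(a,b;c;z) = (1-z)^(c-a-b) F(c-a,c-b;c;z)` for `c` not a nonpositive
integer and `|z| < 1`. -/
theorem euler_transformation (a b c z : ℂ) (hc : ∀ n : ℕ, c ≠ -(n : ℂ))
    (hz : ‖z‖ < 1) :
    (∑' n : ℕ, (ascPochhammer ℂ n).eval a * (ascPochhammer ℂ n).eval b * z ^ n /
        ((ascPochhammer ℂ n).eval c * (n.factorial : ℂ)))
      = (1 - z) ^ (c - a - b) *
          ∑' n : ℕ, (ascPochhammer ℂ n).eval (c - a) *
            (ascPochhammer ℂ n).eval (c - b) * z ^ n /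
            ((ascPochhammer ℂ n).eval c * (n.factorial : ℂ)) := by
  have hz' : ‖z‖ < 1 := by exact hz
  simp only [pch_def]
  have hA : Summable (fun k : ℕ => ‖pch (c-a) k * pch (c-b) k * z^k / (pch c k * (k.factorial:ℂ))‖) :=
    hyp_summable_norm (c-a) (c-b) c z hc hz'
  have hB : Summable (fun m : ℕ => ‖bq (a+b-c) m * z^m‖) :=
    bq_summable_norm (a+b-c) z hz'
  have hC := tsum_mul_tsum_eq_tsum_sum_antidiagonal_of_summable_norm hA hB
  calc (∑' n : ℕ, pch a n * pch b n * z ^ n / (pch c n * (n.factorial : ℂ)))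
      = ∑' n : ℕ, ∑ kl ∈ Finset.HasAntidiagonal.antidiagonal n,
          (pch (c-a) kl.1 * pch (c-b) kl.1 * z^kl.1 / (pch c kl.1 * (kl.1.factorial:ℂ)))
            * (bq (a+b-c) kl.2 * z^kl.2) := by
        apply tsum_congr
        intro n
        rw [Finset.Nat.sum_antidiagonal_eq_sum_range_succ_mk]
        exact (euler_inner_sum a b c z hc n).symm
    _ = (∑' k : ℕ, pch (c-a) k * pch (c-b) k * z^k / (pch c k * (k.factorial:ℂ)))
          * (∑' m : ℕ, bq (a+b-c) m * z^m) := hC.symm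
    _ = (1 - z) ^ (c - a - b) *
          ∑' n : ℕ, pch (c-a) n * pch (c-b) n * z ^ n / (pch c n * (n.factorial : ℂ)) := by
        rw [binomial_tsum_eq (a+b-c) z hz', show -(a+b-c) = c-a-b by ring]
        ring
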